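/- Let G = (V, E⁺, E⁰) be a fuzzy graph with weight function ω that is fuzzy c-closed, and let k ≥ 1, c ≥ 1 be integers. Assume: (i) every connected component of G⁽⁺⁾ contains two vertices that form a nonedge of G; (ii) every vertex of V has fewer than c fuzzy neighbors or at most 2kc real neighbors; (iii) there is no pair with {u,v} ∈ E⁻ and |N⁺(u) ∩ N⁺(v)| > k; (iv) there is no fuzzy edge {u,v} with |N⁰(u) ∩ N⁰(v)| < c and |N⁺(u) ∩ N⁺(v)| > k; (v) there is no clique in G⁽⁺⁾ with at least 3kc + 2 vertices; (vi) there is no nonempty clique K in G⁽⁺⁾ together with a set X of more than 2k + c + 1 vertices that is a clique in G⁽⁰⁾ and satisfies N⁺(v) = K for every v ∈ X. If G admits a clustering of cost at most k, then |V| ≤ 30k²c². -/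

import Mathlib

open Finset

/-- A fuzzy graph: a finite vertex set with disjoint symmetric irreflexive sets of
'real' edges and 'fuzzy' edges; remaining pairs of distinct vertices are 'nonedges'. -/
structure FuzzyGraph (V : Type*) where
  real : V → V → Bool
  fuzzy : V → V → Bool
  real_symm : ∀ u v, real u v = real v u
  fuzzy_symm : ∀ u v, fuzzy u v = fuzzy v u
  real_irrefl : ∀ v, real v v = false
  fuzzy_irrefl : ∀ v, fuzzy v v = false
  not_real_and_fuzzy : ∀ u v, ¬(real u v = true ∧ fuzzy u v = true)

namespace FuzzyGraph

variable {V : Type*}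

/-- The pair `{u,v}` is a nonedge: distinct, neither a real nor a fuzzy edge. -/
def nonedge (G : FuzzyGraph V) (u v : V) : Prop :=
  u ≠ v ∧ ¬G.real u v ∧ ¬G.fuzzy u v

instance (G : FuzzyGraph V) [DecidableEq V] (u v : V) : Decidable (G.nonedge u v) :=
  inferInstanceAs (Decidable (u ≠ v ∧ ¬G.real u v ∧ ¬G.fuzzy u v))

/-- The simple graph `G⁽⁺⁾` of real edges. -/
def plus (G : FuzzyGraph V) : SimpleGraph V where
  Adj u v := G.real u v
  symm := ⟨fun u v (h : G.real u v = true) => show G.real v u = true by rwa [G.real_symm] at h⟩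
  loopless := ⟨fun v (h : G.real v v = true) => by rw [G.real_irrefl] at h; exact Bool.noConfusion h⟩

/-- The simple graph `G⁽⁰⁾` of fuzzy edges. -/
def zero (G : FuzzyGraph V) : SimpleGraph V where
  Adj u v := G.fuzzy u v
  symm := ⟨fun u v (h : G.fuzzy u v = true) => show G.fuzzy v u = true by rwa [G.fuzzy_symm] at h⟩
  loopless := ⟨fun v (h : G.fuzzy v v = true) => by rw [G.fuzzy_irrefl] at h; exact Bool.noConfusion h⟩

variable [Fintype V] [DecidableEq V]

/-- The real neighborhood `N⁺(v)`. -/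
def realNbrs (G : FuzzyGraph V) (v : V) : Finset V := univ.filter fun u => G.real v u

/-- The fuzzy neighborhood `N⁰(v)`. -/
def fuzzyNbrs (G : FuzzyGraph V) (v : V) : Finset V := univ.filter fun u => G.fuzzy v u

/-- The nonneighborhood `N⁻(v)`. -/
def nonNbrs (G : FuzzyGraph V) (v : V) : Finset V := univ.filter fun u => G.nonedge v u

/-- The closed real neighborhood `N⁺[v]`. -/
def closedRealNbrs (G : FuzzyGraph V) (v : V) : Finset V := insert v (G.realNbrs v)

end FuzzyGraph

/-- `ω` is a valid weight function for `G`: symmetric nonnegative integer weights,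
zero exactly on the fuzzy edges. -/
def IsWeight {V : Type*} [Fintype V] [DecidableEq V] (G : FuzzyGraph V) (ω : V → V → ℕ) : Prop :=
  (∀ u v, ω u v = ω v u) ∧ ∀ u v : V, u ≠ v → (ω u v = 0 ↔ G.fuzzy u v)

/-- The unit weight function: weight 1 on real edges and nonedges, 0 on fuzzy edges. -/
def unitW {V : Type*} (G : FuzzyGraph V) : V → V → ℕ := fun u v => if G.fuzzy u v then 0 else 1

/-- Two vertices lie in a common cluster of the clustering `𝒞`. -/
def together {V : Type*} [Fintype V] [DecidableEq V] (𝒞 : Finpartition (univ : Finset V))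
    (u v : V) : Prop :=
  ∃ C ∈ 𝒞.parts, u ∈ C ∧ v ∈ C

instance {V : Type*} [Fintype V] [DecidableEq V] (𝒞 : Finpartition (univ : Finset V)) (u v : V) :
    Decidable (together 𝒞 u v) :=
  inferInstanceAs (Decidable (∃ C ∈ 𝒞.parts, u ∈ C ∧ v ∈ C))

/-- The cost of a clustering: total weight of real edges between different clusters
plus total weight of nonedges inside clusters.  (Each unordered pair is counted twice
in the sum over ordered pairs, whence the division by 2.) -/
def cost {V : Type*} [Fintype V] [DecidableEq V] (G : FuzzyGraph V) (ω : V → V → ℕ)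
    (𝒞 : Finpartition (univ : Finset V)) : ℕ :=
  (∑ p ∈ univ.offDiag,
      ((if G.real p.1 p.2 ∧ ¬together 𝒞 p.1 p.2 then ω p.1 p.2 else 0) +
       (if G.nonedge p.1 p.2 ∧ together 𝒞 p.1 p.2 then ω p.1 p.2 else 0))) / 2

/-- A clique in `G⁽⁺⁾`: pairwise real-adjacent vertices. -/
def IsRealClique {V : Type*} (G : FuzzyGraph V) (K : Finset V) : Prop :=
  ∀ u ∈ K, ∀ v ∈ K, u ≠ v → G.real u v

/-- A clique in `G⁽⁰⁾`: pairwise fuzzy-adjacent vertices. -/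
def IsFuzzyClique {V : Type*} (G : FuzzyGraph V) (K : Finset V) : Prop :=
  ∀ u ∈ K, ∀ v ∈ K, u ≠ v → G.fuzzy u v

/-- A critical clique of `G⁽⁺⁾`: a clique with `⋂_{x ∈ K} N⁺[x] = ⋃_{x ∈ K} N⁺[x]`,
inclusion-wise maximal with this property. -/
def IsCriticalClique {V : Type*} [Fintype V] [DecidableEq V] (G : FuzzyGraph V)
    (K : Finset V) : Prop :=
  IsRealClique G K ∧ K.inf (G.closedRealNbrs) = K.sup (G.closedRealNbrs) ∧
    ∀ K' : Finset V, K ⊆ K' → IsRealClique G K' →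
      K'.inf (G.closedRealNbrs) = K'.sup (G.closedRealNbrs) → K' = K

/-- A simple graph is `c`-closed if every pair of distinct nonadjacent vertices has
fewer than `c` common neighbors. -/
def IsCClosed {V : Type*} (H : SimpleGraph V) (c : ℕ) : Prop :=
  ∀ u v : V, u ≠ v → ¬H.Adj u v → Set.ncard {w | H.Adj u w ∧ H.Adj v w} < c

/-- A fuzzy graph is fuzzy `c`-closed if its fuzzy edge graph `G⁽⁰⁾` is `c`-closed. -/
def FuzzyCClosed {V : Type*} [Fintype V] [DecidableEq V] (G : FuzzyGraph V) (c : ℕ) : Prop :=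
  ∀ u v : V, u ≠ v → ¬G.fuzzy u v → ((G.fuzzyNbrs u) ∩ (G.fuzzyNbrs v)).card < c

section Helpers

variable {V : Type*} [Fintype V] [DecidableEq V]

lemma mem_realNbrs' (G : FuzzyGraph V) {u v : V} : u ∈ G.realNbrs v ↔ G.real v u := by
  simp [FuzzyGraph.realNbrs]

lemma mem_fuzzyNbrs' (G : FuzzyGraph V) {u v : V} : u ∈ G.fuzzyNbrs v ↔ G.fuzzy v u := by
  simp [FuzzyGraph.fuzzyNbrs]

lemma real_ne' (G : FuzzyGraph V) {u v : V} (h : G.real u v) : u ≠ v := by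
  rintro rfl; rw [G.real_irrefl] at h; exact Bool.noConfusion h

lemma real_not_fuzzy' (G : FuzzyGraph V) {u v : V} (h : G.real u v) : ¬ G.fuzzy u v :=
  fun hf => G.not_real_and_fuzzy u v ⟨h, hf⟩

lemma together_comm' {𝒞 : Finpartition (Finset.univ : Finset V)} {u v : V} :
    together 𝒞 u v ↔ together 𝒞 v u :=
  ⟨fun ⟨C, h1, h2, h3⟩ => ⟨C, h1, h3, h2⟩, fun ⟨C, h1, h2, h3⟩ => ⟨C, h1, h3, h2⟩⟩

lemma nonedge_comm' (G : FuzzyGraph V) {u v : V} : G.nonedge u v ↔ G.nonedge v u := by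
  unfold FuzzyGraph.nonedge
  rw [G.real_symm u v, G.fuzzy_symm u v, ne_comm]

/-- Walking within a set closed under adjacency. -/
lemma walk_closed {H : SimpleGraph V} {S : Finset V}
    (hS : ∀ a ∈ S, ∀ b, H.Adj a b → b ∈ S) :
    ∀ {w x : V}, H.Walk w x → w ∈ S → x ∈ S := by
  intro w x p
  induction p with
  | nil => exact fun h => h
  | cons h' _ ih => exact fun hw => ih (hS _ hw _ h')

lemma first_step {H : SimpleGraph V} {w x : V} (h : H.Reachable w x) (hne : w ≠ x) :
    ∃ z, H.Adj w z := by
  obtain ⟨p⟩ := h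
  cases p with
  | nil => exact absurd rfl hne
  | cons h' _ => exact ⟨_, h'⟩

/-- Greedy clique extraction: if every vertex of `D` has fewer than `c` fuzzy
neighbors and every pair in `D` is a real or fuzzy edge, then `D` contains a
real clique of proportional size. -/
lemma greedy_clique (G : FuzzyGraph V) (c : ℕ) :
    ∀ D : Finset V, (∀ v ∈ D, (G.fuzzyNbrs v).card < c) →
      (∀ u ∈ D, ∀ v ∈ D, u ≠ v → G.real u v ∨ G.fuzzy u v) →
      ∃ K, K ⊆ D ∧ IsRealClique G K ∧ D.card ≤ c * K.card := by
  intro D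
  induction D using Finset.strongInduction with
  | _ D ih =>
    intro hdeg hp
    rcases D.eq_empty_or_nonempty with rfl | ⟨v, hv⟩
    · exact ⟨∅, by simp [IsRealClique]⟩
    · set X : Finset V := insert v (G.fuzzyNbrs v) with hX
      have hvX : v ∈ X := Finset.mem_insert_self _ _
      have hss : D \ X ⊂ D := by
        refine (Finset.ssubset_iff_of_subset (Finset.sdiff_subset)).mpr ⟨v, hv, ?_⟩
        simp [hvX]
      obtain ⟨K, hKD, hKcl, hcard⟩ := ih _ hss (fun u hu => hdeg u (Finset.mem_sdiff.mp hu).1)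
        (fun u hu w hw hne => hp u (Finset.mem_sdiff.mp hu).1 w (Finset.mem_sdiff.mp hw).1 hne)
      have hvK : v ∉ K := fun h => (Finset.mem_sdiff.mp (hKD h)).2 hvX
      refine ⟨insert v K, ?_, ?_, ?_⟩
      · intro x hx
        rcases Finset.mem_insert.mp hx with rfl | hx
        · exact hv
        · exact (Finset.mem_sdiff.mp (hKD hx)).1
      · have hreal_of : ∀ a ∈ K, G.real v a := by
          intro a ha
          have haD := Finset.mem_sdiff.mp (hKD ha)
          have hva : v ≠ a := by rintro rfl; exact haD.2 hvX
          rcases hp v hv a haD.1 hva with h | h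
          · exact h
          · exact absurd (Finset.mem_insert_of_mem ((mem_fuzzyNbrs' G).mpr h)) haD.2
        intro x hx y hy hne
        rcases Finset.mem_insert.mp hx with hxv | hxK
        · subst hxv
          rcases Finset.mem_insert.mp hy with hyv | hyK
          · exact absurd hyv.symm hne
          · exact hreal_of y hyK
        · rcases Finset.mem_insert.mp hy with hyv | hyK
          · subst hyv
            rw [G.real_symm]; exact hreal_of x hxK
          · exact hKcl x hxK y hyK hne
      · have h1 : D.card ≤ (D ∩ X).card + (D \ X).card :=
          le_of_eq (Finset.card_inter_add_card_sdiff D X).symm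
        have h2 : (D ∩ X).card ≤ c := by
          have hXc : X.card ≤ (G.fuzzyNbrs v).card + 1 := Finset.card_insert_le _ _
          have := hdeg v hv
          have := Finset.card_le_card (Finset.inter_subset_right : D ∩ X ⊆ X)
          omega
        have h3 : c * (insert v K).card = c * K.card + c := by
          rw [Finset.card_insert_of_notMem hvK]; ring
        have : c * K.card ≥ (D \ X).card := hcard
        omega

lemma arith_aux {k c : ℕ} (hk : 1 ≤ k) (hc : 1 ≤ c) :
    4*k*c + c + 1 ≤ 3*k*c^2 + 2*k + 2*c + 1 := by
  obtain ⟨e, rfl⟩ : ∃ e, k = e + 1 := ⟨k - 1, by omega⟩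
  obtain ⟨d, rfl⟩ : ∃ d, c = d + 1 := ⟨c - 1, by omega⟩
  ring_nf
  nlinarith [Nat.zero_le (e*d), Nat.zero_le (e*d^2), Nat.zero_le (d^2)]

/-- The size bound on the unaffected part of a single cluster. -/
lemma cluster_bound {V : Type*} [Fintype V] [DecidableEq V]
    (G : FuzzyGraph V) (c k : ℕ) (hk : 1 ≤ k) (hc : 1 ≤ c)
    (hcl : FuzzyCClosed G c)
    (h1 : ∀ v : V, (G.fuzzyNbrs v).card < c ∨ (G.realNbrs v).card ≤ 2 * k * c)
    (h2 : ∀ u v : V, G.nonedge u v → ((G.realNbrs u) ∩ (G.realNbrs v)).card ≤ k)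
    (h3 : ∀ u v : V, G.fuzzy u v → ((G.fuzzyNbrs u) ∩ (G.fuzzyNbrs v)).card < c →
      ((G.realNbrs u) ∩ (G.realNbrs v)).card ≤ k)
    (h4 : ∀ K : Finset V, IsRealClique G K → K.card < 3 * k * c + 2)
    (h5 : ∀ K X : Finset V, K.Nonempty → IsRealClique G K → IsFuzzyClique G X →
      (∀ v ∈ X, G.realNbrs v = K) → X.card ≤ 2 * k + c + 1)
    (hreal : ∀ w : V, ∃ z : V, G.real w z)
    (C C' : Finset V) (hC' : C' ⊆ C)
    (hpair : ∀ x ∈ C', ∀ z ∈ C, z ≠ x → G.real x z ∨ G.fuzzy x z)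
    (hsub : ∀ x ∈ C', ∀ z : V, G.real x z → z ∈ C) :
    C'.card ≤ 6*k*c^2 + 2*k + 3*c + 1 := by
  classical
  set A := C'.filter (fun v => c ≤ (G.fuzzyNbrs v).card) with hA
  set D := C'.filter (fun v => ¬ c ≤ (G.fuzzyNbrs v).card) with hD
  have hsplit : A.card + D.card = C'.card :=
    Finset.card_filter_add_card_filter_not _
  have hAsub : A ⊆ C' := Finset.filter_subset _ _
  have hAfuz : ∀ v ∈ A, c ≤ (G.fuzzyNbrs v).card := fun v hv => (Finset.mem_filter.mp hv).2
  have hA2kc : ∀ v ∈ A, (G.realNbrs v).card ≤ 2*k*c := fun v hv =>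
    (h1 v).resolve_left (Nat.not_lt.mpr (hAfuz v hv))
  -- bound on D
  obtain ⟨K, hKD, hKcl, hDc⟩ := greedy_clique G c D
    (fun v hv => Nat.not_le.mp (Finset.mem_filter.mp hv).2)
    (fun u hu v hv hne => hpair u (Finset.filter_subset _ _ hu) v
      (hC' (Finset.filter_subset _ _ hv)) hne.symm)
  have hDbound : D.card ≤ 3*k*c^2 + c := by
    have hK4 := h4 K hKcl
    calc D.card ≤ c * K.card := hDc
    _ ≤ c * (3*k*c+1) := Nat.mul_le_mul_left c (by omega)
    _ = 3*k*c^2 + c := by ring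
  -- bound on A
  have hAbound : A.card ≤ 3*k*c^2 + 2*k + 2*c + 1 := by
    by_cases hb : ∃ u ∈ A, ∃ u' ∈ A, G.real u u'
    · -- some real edge inside A
      obtain ⟨u, hu, u', hu', hruu⟩ := hb
      have hne : u ≠ u' := real_ne' G hruu
      have hnf : ¬ G.fuzzy u u' := real_not_fuzzy' G hruu
      have hcc := hcl u u' hne hnf
      have hcover : A ⊆ insert u (insert u'
          (G.realNbrs u ∪ G.realNbrs u' ∪ (G.fuzzyNbrs u ∩ G.fuzzyNbrs u'))) := by
        intro y hy
        by_cases hyu : y = u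
        · simp [hyu]
        by_cases hyu' : y = u'
        · simp [hyu']
        simp only [Finset.mem_insert, Finset.mem_union, Finset.mem_inter]
        by_cases hy1 : y ∈ G.realNbrs u
        · tauto
        by_cases hy2 : y ∈ G.realNbrs u'
        · tauto
        refine Or.inr (Or.inr (Or.inr ⟨?_, ?_⟩))
        · rcases hpair y (hAsub hy) u (hC' (hAsub hu)) (fun h => hyu h.symm) with h | h
          · exact absurd ((mem_realNbrs' G).mpr (by rw [G.real_symm]; exact h)) hy1
          · exact (mem_fuzzyNbrs' G).mpr (by rw [G.fuzzy_symm]; exact h)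
        · rcases hpair y (hAsub hy) u' (hC' (hAsub hu')) (fun h => hyu' h.symm) with h | h
          · exact absurd ((mem_realNbrs' G).mpr (by rw [G.real_symm]; exact h)) hy2
          · exact (mem_fuzzyNbrs' G).mpr (by rw [G.fuzzy_symm]; exact h)
      have hc1 : A.card ≤ 2 + ((G.realNbrs u).card + (G.realNbrs u').card +
          (G.fuzzyNbrs u ∩ G.fuzzyNbrs u').card) := by
        calc A.card ≤ _ := Finset.card_le_card hcover
        _ ≤ (insert u' (G.realNbrs u ∪ G.realNbrs u' ∪
              (G.fuzzyNbrs u ∩ G.fuzzyNbrs u'))).card + 1 := Finset.card_insert_le _ _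
        _ ≤ (G.realNbrs u ∪ G.realNbrs u' ∪
              (G.fuzzyNbrs u ∩ G.fuzzyNbrs u')).card + 1 + 1 := by
            have := Finset.card_insert_le u' (G.realNbrs u ∪ G.realNbrs u' ∪
              (G.fuzzyNbrs u ∩ G.fuzzyNbrs u'))
            omega
        _ ≤ 2 + ((G.realNbrs u).card + (G.realNbrs u').card +
              (G.fuzzyNbrs u ∩ G.fuzzyNbrs u').card) := by
            have t1 := Finset.card_union_le (G.realNbrs u ∪ G.realNbrs u')
              (G.fuzzyNbrs u ∩ G.fuzzyNbrs u')
            have t2 := Finset.card_union_le (G.realNbrs u) (G.realNbrs u')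
            omega
      have t5 := hA2kc u hu
      have t6 := hA2kc u' hu'
      have harith := arith_aux hk hc
      have hbridge : 2*k*c + 2*k*c = 4*k*c := by ring
      omega
    · push_neg at hb
      have hAfc : ∀ u ∈ A, ∀ u' ∈ A, u ≠ u' → G.fuzzy u u' := fun u hu u' hu' hne =>
        (hpair u (hAsub hu) u' (hC' (hAsub hu')) hne.symm).resolve_left (hb u hu u' hu')
      rcases A.eq_empty_or_nonempty with hAe | ⟨x₀, hx₀⟩
      · rw [hAe]; simp
      by_cases hcse : ∃ x ∈ A, ∃ z : V, G.real x z ∧ (G.realNbrs z).card ≤ 2*k*c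
      · -- case (c): some real neighbor with small real degree
        obtain ⟨x, hx, z, hxz, hz2⟩ := hcse
        have hnexz : x ≠ z := real_ne' G hxz
        have hnfxz : ¬ G.fuzzy x z := real_not_fuzzy' G hxz
        have hcc := hcl x z hnexz hnfxz
        have hzC : z ∈ C := hsub x (hAsub hx) z hxz
        have hcover : A ⊆ insert x (insert z
            (G.realNbrs z ∪ (G.fuzzyNbrs x ∩ G.fuzzyNbrs z))) := by
          intro y hy
          by_cases hyx : y = x
          · simp [hyx]
          by_cases hyz : y = z
          · simp [hyz]
          simp only [Finset.mem_insert, Finset.mem_union, Finset.mem_inter]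
          rcases hpair y (hAsub hy) z hzC (fun h => hyz h.symm) with h | h
          · exact Or.inr (Or.inr (Or.inl ((mem_realNbrs' G).mpr
              (by rw [G.real_symm]; exact h))))
          · refine Or.inr (Or.inr (Or.inr ⟨?_, ?_⟩))
            · exact (mem_fuzzyNbrs' G).mpr (by
                rw [G.fuzzy_symm]; exact hAfc y hy x hx hyx)
            · exact (mem_fuzzyNbrs' G).mpr (by rw [G.fuzzy_symm]; exact h)
        have hc1 : A.card ≤ 2 + ((G.realNbrs z).card +
            (G.fuzzyNbrs x ∩ G.fuzzyNbrs z).card) := by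
          calc A.card ≤ _ := Finset.card_le_card hcover
          _ ≤ (insert z (G.realNbrs z ∪ (G.fuzzyNbrs x ∩ G.fuzzyNbrs z))).card + 1 :=
              Finset.card_insert_le _ _
          _ ≤ 2 + ((G.realNbrs z).card + (G.fuzzyNbrs x ∩ G.fuzzyNbrs z).card) := by
              have t0 := Finset.card_insert_le z
                (G.realNbrs z ∪ (G.fuzzyNbrs x ∩ G.fuzzyNbrs z))
              have t1 := Finset.card_union_le (G.realNbrs z)
                (G.fuzzyNbrs x ∩ G.fuzzyNbrs z)
              omega
        have harith := arith_aux hk hc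
        have hbridge : 2*k*c + 2*k*c = 4*k*c := by ring
        omega
      · push_neg at hcse
        have hzfuz : ∀ x ∈ A, ∀ z : V, G.real x z → (G.fuzzyNbrs z).card < c := by
          intro x hx z hxz
          exact (h1 z).resolve_right (Nat.not_le.mpr (hcse x hx z hxz))
        have hstar : ∀ x ∈ A, ∀ z : V, G.real x z →
            A \ G.realNbrs z ⊆ insert z (G.fuzzyNbrs z) := by
          intro x hx z hxz y hy
          obtain ⟨hyA, hynz⟩ := Finset.mem_sdiff.mp hy
          by_cases hyz : y = z
          · simp [hyz]
          apply Finset.mem_insert_of_mem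
          have hzC : z ∈ C := hsub x (hAsub hx) z hxz
          rcases hpair y (hAsub hyA) z hzC (fun h => hyz h.symm) with h | h
          · exact absurd ((mem_realNbrs' G).mpr (by rw [G.real_symm]; exact h)) hynz
          · exact (mem_fuzzyNbrs' G).mpr (by rw [G.fuzzy_symm]; exact h)
        have hmiss : ∀ x ∈ A, ∀ z : V, G.real x z → (A \ G.realNbrs z).card ≤ c := by
          intro x hx z hxz
          have t0 := Finset.card_le_card (hstar x hx z hxz)
          have t1 := Finset.card_insert_le z (G.fuzzyNbrs z)
          have t2 := hzfuz x hx z hxz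
          omega
        by_cases hd1 : ∃ x ∈ A, ∃ x' ∈ A, ∃ z z' : V,
            G.real x z ∧ G.real x' z' ∧ z ≠ z' ∧ ¬ G.real z z'
        · -- two non-really-adjacent neighbors
          obtain ⟨x, hx, x', hx', z, z', hxz, hxz', hzz', hnr⟩ := hd1
          have hcomk : ((G.realNbrs z) ∩ (G.realNbrs z')).card ≤ k := by
            by_cases hf : G.fuzzy z z'
            · exact h3 z z' hf (lt_of_le_of_lt
                (Finset.card_le_card Finset.inter_subset_left) (hzfuz x hx z hxz))
            · exact h2 z z' ⟨hzz', hnr, hf⟩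
          have hcover : A ⊆ (A \ G.realNbrs z) ∪ (A \ G.realNbrs z') ∪
              (G.realNbrs z ∩ G.realNbrs z') := by
            intro y hy
            simp only [Finset.mem_union, Finset.mem_sdiff, Finset.mem_inter]
            by_cases hy1 : y ∈ G.realNbrs z
            · by_cases hy2 : y ∈ G.realNbrs z'
              · tauto
              · tauto
            · tauto
          have hc1 : A.card ≤ c + c + k := by
            have t0 := Finset.card_le_card hcover
            have t1 := Finset.card_union_le ((A \ G.realNbrs z) ∪ (A \ G.realNbrs z'))
              (G.realNbrs z ∩ G.realNbrs z')
            have t2 := Finset.card_union_le (A \ G.realNbrs z) (A \ G.realNbrs z')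
            have t3 := hmiss x hx z hxz
            have t4 := hmiss x' hx' z' hxz'
            omega
          have : 0 ≤ 3*k*c^2 := Nat.zero_le _
          have hck : c + c + k ≤ 3*k*c^2 + 2*k + 2*c + 1 := by omega
          omega
        · push_neg at hd1
          set Z := A.biUnion (fun x => G.realNbrs x) with hZ
          have hZmem : ∀ z ∈ Z, ∃ x ∈ A, G.real x z := by
            intro z hz
            obtain ⟨x, hx, hzx⟩ := Finset.mem_biUnion.mp hz
            exact ⟨x, hx, (mem_realNbrs' G).mp hzx⟩
          have hZcl : IsRealClique G Z := by
            intro z hz z' hz' hne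
            obtain ⟨x, hx, hxz⟩ := hZmem z hz
            obtain ⟨x', hx', hxz'⟩ := hZmem z' hz'
            exact hd1 x hx x' hx' z z' hxz hxz' hne
          have hZcard : Z.card ≤ 3*k*c + 1 := by have := h4 Z hZcl; omega
          have hZne : Z.Nonempty := by
            obtain ⟨z, hz⟩ := hreal x₀
            exact ⟨z, Finset.mem_biUnion.mpr ⟨x₀, hx₀, (mem_realNbrs' G).mpr hz⟩⟩
          set X' := A.filter (fun x => G.realNbrs x = Z) with hX'
          have hX'card : X'.card ≤ 2*k + c + 1 := h5 Z X' hZne hZcl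
            (fun u hu v hv hne => hAfc u (Finset.filter_subset _ _ hu) v
              (Finset.filter_subset _ _ hv) hne)
            (fun v hv => (Finset.mem_filter.mp hv).2)
          have hAX : A \ X' ⊆ Z.biUnion (fun z => insert z (G.fuzzyNbrs z)) := by
            intro y hy
            obtain ⟨hyA, hyX⟩ := Finset.mem_sdiff.mp hy
            have hyZ : G.realNbrs y ⊆ Z := Finset.subset_biUnion_of_mem _ hyA
            have hneq : G.realNbrs y ≠ Z := fun h => hyX (Finset.mem_filter.mpr ⟨hyA, h⟩)
            obtain ⟨z, hzZ, hzny⟩ := Finset.exists_of_ssubset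
              ((Finset.ssubset_iff_subset_ne).mpr ⟨hyZ, hneq⟩)
            obtain ⟨x, hx, hxz⟩ := hZmem z hzZ
            refine Finset.mem_biUnion.mpr ⟨z, hzZ, ?_⟩
            refine hstar x hx z hxz (Finset.mem_sdiff.mpr ⟨hyA, fun hyz => hzny ?_⟩)
            exact (mem_realNbrs' G).mpr (by rw [G.real_symm]; exact (mem_realNbrs' G).mp hyz)
          have hAXcard : (A \ X').card ≤ Z.card * c := by
            refine le_trans (Finset.card_le_card hAX) ?_
            refine Finset.card_biUnion_le_card_mul _ _ _ ?_
            intro z hz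
            obtain ⟨x, hx, hxz⟩ := hZmem z hz
            have t1 := Finset.card_insert_le z (G.fuzzyNbrs z)
            have t2 := hzfuz x hx z hxz
            omega
          have hsplitA : A.card ≤ (A \ X').card + X'.card :=
            Finset.card_le_card_sdiff_add_card
          have hZc : Z.card * c ≤ (3*k*c+1) * c := Nat.mul_le_mul_right c hZcard
          have he : (3*k*c+1) * c = 3*k*c^2 + c := by ring
          omega
  have hbridge : 3*k*c^2 + 3*k*c^2 = 6*k*c^2 := by ring
  omega

end Helpers

/-- Under the stated reducedness conditions on a fuzzy `c`-closed graph, if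
every connected component of `G⁽⁺⁾` contains a nonedge and `G` admits a clustering of cost
at most `k`, then `|V| ≤ 30k²c²`. -/
theorem stmt12 {V : Type*} [Fintype V] [DecidableEq V]
    (G : FuzzyGraph V) (ω : V → V → ℕ) (hω : IsWeight G ω) (c k : ℕ) (hk : 1 ≤ k) (hc : 1 ≤ c)
    (hcl : FuzzyCClosed G c)
    (h0 : ∀ w : V, ∃ u v : V, G.plus.Reachable w u ∧ G.plus.Reachable w v ∧ G.nonedge u v)
    (h1 : ∀ v : V, (G.fuzzyNbrs v).card < c ∨ (G.realNbrs v).card ≤ 2 * k * c)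
    (h2 : ∀ u v : V, G.nonedge u v → ((G.realNbrs u) ∩ (G.realNbrs v)).card ≤ k)
    (h3 : ∀ u v : V, G.fuzzy u v → ((G.fuzzyNbrs u) ∩ (G.fuzzyNbrs v)).card < c →
      ((G.realNbrs u) ∩ (G.realNbrs v)).card ≤ k)
    (h4 : ∀ K : Finset V, IsRealClique G K → K.card < 3 * k * c + 2)
    (h5 : ∀ K X : Finset V, K.Nonempty → IsRealClique G K → IsFuzzyClique G X →
      (∀ v ∈ X, G.realNbrs v = K) → X.card ≤ 2 * k + c + 1)
    (hsol : ∃ 𝒞 : Finpartition (Finset.univ : Finset V), cost G ω 𝒞 ≤ k) :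
    Fintype.card V ≤ 30 * k ^ 2 * c ^ 2 := by
  classical
  obtain ⟨𝒞, hcost⟩ := hsol
  -- every vertex has a real neighbor
  have hreal : ∀ w : V, ∃ z : V, G.real w z := by
    intro w
    obtain ⟨u, v, hwu, hwv, hne, -, -⟩ := h0 w
    by_cases hu : u = w
    · subst hu
      obtain ⟨z, hz⟩ := first_step hwv (fun h => hne h)
      exact ⟨z, hz⟩
    · obtain ⟨z, hz⟩ := first_step hwu (fun h => hu h.symm)
      exact ⟨z, hz⟩
  -- the pair-cost function
  set f : V × V → ℕ := fun p =>
    (if G.real p.1 p.2 ∧ ¬together 𝒞 p.1 p.2 then ω p.1 p.2 else 0) +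
    (if G.nonedge p.1 p.2 ∧ together 𝒞 p.1 p.2 then ω p.1 p.2 else 0) with hf
  have hcost' : (∑ p ∈ univ.offDiag, f p) / 2 ≤ k := hcost
  have key : ∀ a b : V, f (a, b) = f (b, a) := by
    intro a b
    have hr : (G.real a b : Prop) ↔ G.real b a := by rw [G.real_symm]
    have ht : together 𝒞 a b ↔ together 𝒞 b a := together_comm'
    have hn : G.nonedge a b ↔ G.nonedge b a := nonedge_comm' G
    have hw : ω a b = ω b a := hω.1 a b
    simp only [hf]
    exact congrArg₂ (· + ·)
      (if_congr (and_congr hr (not_congr ht)) hw rfl)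
      (if_congr (and_congr hn ht) hw rfl)
  set ι := Fintype.equivFin V with hι
  set half := univ.offDiag.filter (fun p : V × V => ι p.1 < ι p.2) with hhalf
  have hsum : ∑ p ∈ univ.offDiag, f p =
      ∑ p ∈ half, f p + ∑ p ∈ univ.offDiag.filter (fun p => ¬ ι p.1 < ι p.2), f p :=
    (Finset.sum_filter_add_sum_filter_not _ _ _).symm
  have hswap : ∑ p ∈ univ.offDiag.filter (fun p => ¬ ι p.1 < ι p.2), f p =
      ∑ p ∈ half, f p := by
    refine Finset.sum_nbij' (i := Prod.swap) (j := Prod.swap) ?_ ?_ ?_ ?_ ?_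
    · intro p hp
      obtain ⟨hpo, hplt⟩ := Finset.mem_filter.mp hp
      obtain ⟨-, -, hne⟩ := Finset.mem_offDiag.mp hpo
      refine Finset.mem_filter.mpr ⟨Finset.mem_offDiag.mpr
        ⟨Finset.mem_univ _, Finset.mem_univ _, fun h => hne h.symm⟩, ?_⟩
      have hinj : ι p.1 ≠ ι p.2 := fun h => hne (ι.injective h)
      exact lt_of_le_of_ne (not_lt.mp hplt) (Ne.symm hinj)
    · intro p hp
      obtain ⟨hpo, hplt⟩ := Finset.mem_filter.mp hp
      obtain ⟨-, -, hne⟩ := Finset.mem_offDiag.mp hpo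
      refine Finset.mem_filter.mpr ⟨Finset.mem_offDiag.mpr
        ⟨Finset.mem_univ _, Finset.mem_univ _, fun h => hne h.symm⟩, ?_⟩
      exact not_lt.mpr (le_of_lt hplt)
    · intro p _; exact Prod.swap_swap p
    · intro p _; exact Prod.swap_swap p
    · intro p _; exact key p.1 p.2
  have hT : ∑ p ∈ univ.offDiag, f p = 2 * ∑ p ∈ half, f p := by rw [hsum, hswap]; ring
  have hTk : ∑ p ∈ half, f p ≤ k := by rw [hT] at hcost'; omega
  set paid : V → V → Prop := fun u v =>
    (G.real u v ∧ ¬together 𝒞 u v) ∨ (G.nonedge u v ∧ together 𝒞 u v) with hpaidd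
  set halfPaid := half.filter (fun p => paid p.1 p.2) with hhp
  have hpd1 : ∀ p ∈ halfPaid, 1 ≤ f p := by
    intro p hp
    obtain ⟨hph, hppaid⟩ := Finset.mem_filter.mp hp
    obtain ⟨hpo, -⟩ := Finset.mem_filter.mp hph
    obtain ⟨-, -, hne⟩ := Finset.mem_offDiag.mp hpo
    have hωpos : ¬ G.fuzzy p.1 p.2 → 1 ≤ ω p.1 p.2 := by
      intro hnf
      have := (hω.2 p.1 p.2 hne).not.mpr hnf
      omega
    rcases hppaid with ⟨hr, ht⟩ | ⟨hn, ht⟩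
    · have h1' := hωpos (real_not_fuzzy' G hr)
      simp only [hf]
      rw [if_pos (show (G.real p.1 p.2 : Prop) ∧ ¬together 𝒞 p.1 p.2 from ⟨hr, ht⟩)]
      exact le_trans h1' (Nat.le_add_right _ _)
    · have h1' := hωpos hn.2.2
      simp only [hf]
      rw [if_pos (show G.nonedge p.1 p.2 ∧ together 𝒞 p.1 p.2 from ⟨hn, ht⟩)]
      exact le_trans h1' (Nat.le_add_left _ _)
  have hhpk : halfPaid.card ≤ k := by
    calc halfPaid.card = ∑ _p ∈ halfPaid, 1 := by rw [Finset.card_eq_sum_ones]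
    _ ≤ ∑ p ∈ halfPaid, f p := Finset.sum_le_sum hpd1
    _ ≤ ∑ p ∈ half, f p := Finset.sum_le_sum_of_subset (Finset.filter_subset _ _)
    _ ≤ k := hTk
  set B := univ.filter (fun v => ∃ u, paid v u) with hB
  have hpaid_symm : ∀ u v, paid u v → paid v u := by
    intro u v h
    simp only [hpaidd] at h ⊢
    rcases h with ⟨hr, ht⟩ | ⟨hn, ht⟩
    · exact Or.inl ⟨by rw [G.real_symm]; exact hr, fun t => ht (together_comm'.mp t)⟩
    · exact Or.inr ⟨(nonedge_comm' G).mp hn, together_comm'.mp ht⟩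
  have hBsub : B ⊆ halfPaid.biUnion (fun p => {p.1, p.2}) := by
    intro v hv
    obtain ⟨-, u, hp⟩ := Finset.mem_filter.mp hv
    have hvu : v ≠ u := by
      rcases hp with ⟨hr, -⟩ | ⟨hn, -⟩
      · exact real_ne' G hr
      · exact hn.1
    rcases lt_trichotomy (ι v) (ι u) with hlt | heq | hgt
    · exact Finset.mem_biUnion.mpr ⟨(v, u), Finset.mem_filter.mpr
        ⟨Finset.mem_filter.mpr ⟨Finset.mem_offDiag.mpr
          ⟨Finset.mem_univ _, Finset.mem_univ _, hvu⟩, hlt⟩, hp⟩, by simp⟩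
    · exact absurd (ι.injective heq) hvu
    · exact Finset.mem_biUnion.mpr ⟨(u, v), Finset.mem_filter.mpr
        ⟨Finset.mem_filter.mpr ⟨Finset.mem_offDiag.mpr
          ⟨Finset.mem_univ _, Finset.mem_univ _, hvu.symm⟩, hgt⟩, hpaid_symm v u hp⟩, by simp⟩
  have hBcard : B.card ≤ 2 * k := by
    have t0 := Finset.card_le_card hBsub
    have t1 : (halfPaid.biUnion (fun p => ({p.1, p.2} : Finset V))).card ≤
        halfPaid.card * 2 := by
      refine Finset.card_biUnion_le_card_mul _ _ _ ?_
      intro p _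
      have := Finset.card_insert_le p.1 ({p.2} : Finset V)
      simp only [Finset.card_singleton] at this
      omega
    omega
  -- cluster properties
  have hpairC : ∀ C ∈ 𝒞.parts, ∀ x ∈ C \ B, ∀ z ∈ C, z ≠ x →
      G.real x z ∨ G.fuzzy x z := by
    intro C hC x hx z hz hne
    by_contra hcon
    push_neg at hcon
    obtain ⟨hxC, hxB⟩ := Finset.mem_sdiff.mp hx
    exact hxB (Finset.mem_filter.mpr ⟨Finset.mem_univ _, z,
      Or.inr ⟨⟨fun h => hne h.symm, hcon.1, hcon.2⟩, ⟨C, hC, hxC, hz⟩⟩⟩)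
  have hsubC : ∀ C ∈ 𝒞.parts, ∀ x ∈ C \ B, ∀ z : V, G.real x z → z ∈ C := by
    intro C hC x hx z hxz
    obtain ⟨hxC, hxB⟩ := Finset.mem_sdiff.mp hx
    by_contra hzC
    apply hxB
    refine Finset.mem_filter.mpr ⟨Finset.mem_univ _, z, Or.inl ⟨hxz, ?_⟩⟩
    rintro ⟨C₂, hC₂, hx₂, hz₂⟩
    exact hzC (𝒞.eq_of_mem_parts hC₂ hC hx₂ hxC ▸ hz₂)
  -- every part meets B
  have hmeets : ∀ C ∈ 𝒞.parts, (C ∩ B).Nonempty := by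
    intro C hC
    obtain ⟨w, hw⟩ := 𝒞.nonempty_of_mem_parts hC
    by_contra hemp
    rw [Finset.not_nonempty_iff_eq_empty] at hemp
    have hCB : ∀ x ∈ C, x ∉ B := by
      intro x hx hxB
      have : x ∈ C ∩ B := Finset.mem_inter.mpr ⟨hx, hxB⟩
      rw [hemp] at this
      exact absurd this (Finset.notMem_empty x)
    have hclosed : ∀ a ∈ C, ∀ b, G.plus.Adj a b → b ∈ C := by
      intro a ha b hab
      exact hsubC C hC a (Finset.mem_sdiff.mpr ⟨ha, hCB a ha⟩) b hab
    obtain ⟨u, v, hwu, hwv, hne⟩ := h0 w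
    have huC : u ∈ C := by obtain ⟨p⟩ := hwu; exact walk_closed hclosed p hw
    have hvC : v ∈ C := by obtain ⟨p⟩ := hwv; exact walk_closed hclosed p hw
    have : u ∈ B := Finset.mem_filter.mpr ⟨Finset.mem_univ _, v,
      Or.inr ⟨hne, ⟨C, hC, huC, hvC⟩⟩⟩
    exact hCB u huC this
  -- per-cluster bound
  have hCbound : ∀ C ∈ 𝒞.parts, (C \ B).card ≤ 6*k*c^2 + 2*k + 3*c + 1 := by
    intro C hC
    exact cluster_bound G c k hk hc hcl h1 h2 h3 h4 h5 hreal C (C \ B)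
      (Finset.sdiff_subset) (hpairC C hC) (hsubC C hC)
  -- disjointness of intersections with B
  have hdisj : ∀ C₁ ∈ 𝒞.parts, ∀ C₂ ∈ 𝒞.parts, C₁ ≠ C₂ →
      Disjoint (C₁ ∩ B) (C₂ ∩ B) := by
    intro C₁ h₁ C₂ h₂ hne
    exact Disjoint.mono Finset.inter_subset_left Finset.inter_subset_left
      (𝒞.disjoint h₁ h₂ hne)
  have hsum_inter : ∑ C ∈ 𝒞.parts, (C ∩ B).card ≤ B.card := by
    rw [← Finset.card_biUnion hdisj]
    exact Finset.card_le_card (Finset.biUnion_subset.mpr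
      (fun C _ => Finset.inter_subset_right))
  have hparts_card : 𝒞.parts.card ≤ B.card := by
    calc 𝒞.parts.card = ∑ _C ∈ 𝒞.parts, 1 := by rw [Finset.card_eq_sum_ones]
    _ ≤ ∑ C ∈ 𝒞.parts, (C ∩ B).card := Finset.sum_le_sum
        (fun C hC => Finset.card_pos.mpr (hmeets C hC))
    _ ≤ B.card := hsum_inter
  have htotal : Fintype.card V = ∑ C ∈ 𝒞.parts, C.card := by
    rw [← Finset.card_univ, ← 𝒞.sum_card_parts]
  have hfinal : Fintype.card V ≤ 2*k + 2*k * (6*k*c^2 + 2*k + 3*c + 1) := by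
    calc Fintype.card V = ∑ C ∈ 𝒞.parts, ((C ∩ B).card + (C \ B).card) := by
          rw [htotal]
          exact Finset.sum_congr rfl
            (fun C _ => (Finset.card_inter_add_card_sdiff C B).symm)
    _ = (∑ C ∈ 𝒞.parts, (C ∩ B).card) + ∑ C ∈ 𝒞.parts, (C \ B).card :=
          Finset.sum_add_distrib
    _ ≤ B.card + ∑ _C ∈ 𝒞.parts, (6*k*c^2 + 2*k + 3*c + 1) :=
          add_le_add hsum_inter (Finset.sum_le_sum hCbound)
    _ = B.card + 𝒞.parts.card * (6*k*c^2 + 2*k + 3*c + 1) := by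
          rw [Finset.sum_const, smul_eq_mul]
    _ ≤ 2*k + 2*k * (6*k*c^2 + 2*k + 3*c + 1) :=
          add_le_add hBcard
            (Nat.mul_le_mul_right _ (hparts_card.trans hBcard))
  have harith : 2*k + 2*k * (6*k*c^2 + 2*k + 3*c + 1) ≤ 30 * k^2 * c^2 := by
    obtain ⟨e, rfl⟩ : ∃ e, k = e + 1 := ⟨k - 1, by omega⟩
    obtain ⟨d, rfl⟩ : ∃ d, c = d + 1 := ⟨c - 1, by omega⟩
    ring_nf
    nlinarith [Nat.zero_le (e*d), Nat.zero_le (e^2*d), Nat.zero_le (e*d^2),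
      Nat.zero_le (e^2*d^2), Nat.zero_le (d^2), Nat.zero_le (e^2), Nat.zero_le (e*e*d*d)]
  exact hfinal.trans harith
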